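/- Let S be a countably based Cu-semigroup satisfying O7. Then every x ∈ S and every idempotent w ∈ S (i.e., 2w = w) have an infimum x ∧ w in S. -/
import Mathlib


open scoped ENNReal

namespace CuFormal

variable {S : Type*} [AddCommMonoid S] [PartialOrder S]

/-- The algebra-free way-below relation: `x ≪ y` iff whenever `y ≤ sup yₙ` for an
increasing sequence with supremum, then `x ≤ yₙ` for some `n`. -/
def WayBelow (x y : S) : Prop :=
  ∀ f : ℕ → S, Monotone f → ∀ s : S, IsLUB (Set.range f) s → y ≤ s → ∃ n, x ≤ f n

/-- Positively ordered monoid with addition monotone. -/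
def PosOrdered : Prop :=
  (∀ x : S, (0 : S) ≤ x) ∧ ∀ a b c : S, b ≤ c → a + b ≤ a + c

/-- O1: every increasing sequence has a supremum. -/
def AxO1 : Prop := ∀ f : ℕ → S, Monotone f → ∃ s : S, IsLUB (Set.range f) s

/-- O2: every element is the supremum of a ≪-increasing sequence. -/
def AxO2 : Prop := ∀ x : S, ∃ f : ℕ → S, Monotone f ∧
  (∀ n, WayBelow (f n) (f (n + 1))) ∧ IsLUB (Set.range f) x

/-- O3 -/
def AxO3 : Prop := ∀ x₁ y₁ x₂ y₂ : S,
  WayBelow x₁ y₁ → WayBelow x₂ y₂ → WayBelow (x₁ + x₂) (y₁ + y₂)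

/-- O4 -/
def AxO4 : Prop := ∀ f g : ℕ → S, Monotone f → Monotone g →
  ∀ a b : S, IsLUB (Set.range f) a → IsLUB (Set.range g) b →
    IsLUB (Set.range fun n => f n + g n) (a + b)

/-- A Cu-semigroup: positively ordered monoid satisfying O1–O4. -/
def CuSemigroup : Prop :=
  PosOrdered (S := S) ∧ AxO1 (S := S) ∧ AxO2 (S := S) ∧ AxO3 (S := S) ∧ AxO4 (S := S)

/-- O5 -/
def AxO5 : Prop := ∀ x' x y w' w : S, WayBelow x' x → x ≤ y → WayBelow w' w →
  x + w ≤ y → ∃ z : S, x' + z ≤ y ∧ y ≤ x + z ∧ WayBelow w' z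

/-- O6 -/
def AxO6 : Prop := ∀ x' x y z : S, WayBelow x' x → x ≤ y + z →
  ∃ y' z' : S, x' ≤ y' + z' ∧ y' ≤ x ∧ y' ≤ y ∧ z' ≤ x ∧ z' ≤ z

/-- O7 -/
def AxO7 : Prop := ∀ x₁' x₁ x₂' x₂ w : S,
  WayBelow x₁' x₁ → x₁ ≤ w → WayBelow x₂' x₂ → x₂ ≤ w →
  ∃ x : S, WayBelow x₁' x ∧ WayBelow x₂' x ∧ x ≤ w ∧ x ≤ x₁ + x₂

/-- An ideal: a downward hereditary subsemigroup closed under suprema of increasing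
sequences. -/
def IsIdeal (J : Set S) : Prop :=
  (0 : S) ∈ J ∧ (∀ x y : S, x ∈ J → y ∈ J → x + y ∈ J) ∧
  (∀ x y : S, y ∈ J → x ≤ y → x ∈ J) ∧
  (∀ f : ℕ → S, Monotone f → (∀ n, f n ∈ J) →
    ∀ s : S, IsLUB (Set.range f) s → s ∈ J)

/-- Countably based. -/
def CountablyBased : Prop := ∃ B : Set S, B.Countable ∧
  ∀ x : S, ∃ f : ℕ → S, (∀ n, f n ∈ B) ∧ Monotone f ∧
    (∀ n, WayBelow (f n) (f (n + 1))) ∧ IsLUB (Set.range f) x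

/-- A functional on `S`: preserves `0`, addition, order and suprema of increasing
sequences. -/
def IsFunctional (l : S → ℝ≥0∞) : Prop :=
  l 0 = 0 ∧ (∀ x y : S, l (x + y) = l x + l y) ∧ Monotone l ∧
  (∀ f : ℕ → S, Monotone f → ∀ s : S, IsLUB (Set.range f) s → l s = ⨆ n, l (f n))

/-- `(x̂ ∧ ŷ)(λ) = inf { λ₁(x) + λ₂(y) : λ = λ₁ + λ₂ }`. -/
noncomputable def hatInf (x y : S) (l : S → ℝ≥0∞) : ℝ≥0∞ :=
  sInf {t : ℝ≥0∞ | ∃ l₁ l₂ : S → ℝ≥0∞, IsFunctional l₁ ∧ IsFunctional l₂ ∧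
    (∀ u : S, l u = l₁ u + l₂ u) ∧ t = l₁ x + l₂ y}

/-- Edwards' condition for the functional `l`. -/
def EdwardsFor (l : S → ℝ≥0∞) : Prop := ∀ x y : S,
  hatInf x y l = sSup {t : ℝ≥0∞ | ∃ z : S, z ≤ x ∧ z ≤ y ∧ t = l z}

/-- The ideal generated by a subset. -/
def idealGen (X : Set S) : Set S := ⋂₀ {J : Set S | IsIdeal J ∧ X ⊆ J}


theorem wayBelow_le {a b : S} (h : WayBelow a b) : a ≤ b := by
  obtain ⟨n, hn⟩ := h (fun _ => b) monotone_const b (by simp [Set.range_const]) le_rfl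
  exact hn

theorem wayBelow_of_le {a b c : S} (h : WayBelow a b) (hbc : b ≤ c) : WayBelow a c :=
  fun f hf s hs hcs => h f hf s hs (hbc.trans hcs)

theorem interp (hO2 : AxO2 (S := S)) {a b y : S} (ha : WayBelow a y) (hb : WayBelow b y) :
    ∃ d : S, a ≤ d ∧ b ≤ d ∧ WayBelow d y := by
  obtain ⟨g, hgmono, hgwb, hglub⟩ := hO2 y
  obtain ⟨n, hn⟩ := ha g hgmono y hglub le_rfl
  obtain ⟨k, hk⟩ := hb g hgmono y hglub le_rfl
  refine ⟨g (max n k), hn.trans (hgmono (le_max_left n k)),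
    hk.trans (hgmono (le_max_right n k)), ?_⟩
  exact wayBelow_of_le (hgwb (max n k)) (hglub.1 (Set.mem_range_self _))

/-- In a countably based Cu-semigroup satisfying O7, every element and
every idempotent have an infimum. -/
theorem stmt8 {S : Type*} [AddCommMonoid S] [PartialOrder S]
    (hCu : CuSemigroup (S := S)) (hcb : CountablyBased (S := S)) (hO7 : AxO7 (S := S))
    (x w : S) (hw : w + w = w) :
    ∃ m : S, IsGLB {x, w} m := by
  classical
  obtain ⟨⟨hpos, hadd⟩, hO1, hO2, _, _⟩ := hCu
  obtain ⟨B, hBc, hB⟩ := hcb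
  set C : Set S := {b | b ∈ B ∧ ∃ z : S, WayBelow b z ∧ z ≤ x ∧ z ≤ w} with hCdef
  have hCc : C.Countable := hBc.mono fun b hb => hb.1
  have hCne : C.Nonempty := by
    obtain ⟨f, hfB, hfmono, hfwb, hflub⟩ := hB 0
    exact ⟨f 0, hfB 0, f 1, hfwb 0,
      (hflub.1 (Set.mem_range_self 1)).trans (hpos x),
      (hflub.1 (Set.mem_range_self 1)).trans (hpos w)⟩
  obtain ⟨c, hc⟩ := hCc.exists_eq_range hCne
  have hcmem : ∀ n, c n ∈ C := fun n => hc ▸ Set.mem_range_self n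
  -- the key step using O7
  have step : ∀ (a' a : S) (n : ℕ), ∃ b' b : S,
      (WayBelow a' a ∧ a ≤ x ∧ a ≤ w) →
      a' ≤ b' ∧ c n ≤ b' ∧ WayBelow b' b ∧ b ≤ x ∧ b ≤ w := by
    intro a' a n
    by_cases h : WayBelow a' a ∧ a ≤ x ∧ a ≤ w
    · obtain ⟨ha'a, hax, haw⟩ := h
      obtain ⟨-, z, hcz, hzx, hzw⟩ := hcmem n
      obtain ⟨y, hy1, hy2, hyx, hysum⟩ := hO7 a' a (c n) z x ha'a hax hcz hzx
      have hyw : y ≤ w := by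
        calc y ≤ a + z := hysum
          _ ≤ a + w := hadd a z w hzw
          _ = w + a := add_comm _ _
          _ ≤ w + w := hadd w a w haw
          _ = w := hw
      obtain ⟨d, hd1, hd2, hd3⟩ := interp hO2 hy1 hy2
      exact ⟨d, y, fun _ => ⟨hd1, hd2, hd3, hyx, hyw⟩⟩
    · exact ⟨0, 0, fun hh => absurd hh h⟩
  choose F G hFG using step
  set g : ℕ → S × S :=
    fun n => Nat.rec ((0 : S), (0 : S)) (fun n p => (F p.1 p.2 n, G p.1 p.2 n)) n with hg
  have inv : ∀ n, WayBelow (g n).1 (g n).2 ∧ (g n).2 ≤ x ∧ (g n).2 ≤ w := by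
    intro n
    induction n with
    | zero => exact ⟨fun f _ _ _ _ => ⟨0, hpos _⟩, hpos x, hpos w⟩
    | succ n ih =>
      have h := hFG (g n).1 (g n).2 n ih
      exact ⟨h.2.2.1, h.2.2.2.1, h.2.2.2.2⟩
  have hmono : Monotone (fun n => (g n).1) := by
    apply monotone_nat_of_le_succ
    intro n
    exact (hFG (g n).1 (g n).2 n (inv n)).1
  obtain ⟨m, hm⟩ := hO1 (fun n => (g n).1) hmono
  have hcle : ∀ k, c k ≤ m := fun k =>
    ((hFG (g k).1 (g k).2 k (inv k)).2.1).trans (hm.1 (Set.mem_range_self (k + 1)))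
  have hmx : m ≤ x := hm.2 (by
    rintro t ⟨n, rfl⟩
    exact (wayBelow_le (inv n).1).trans (inv n).2.1)
  have hmw : m ≤ w := hm.2 (by
    rintro t ⟨n, rfl⟩
    exact (wayBelow_le (inv n).1).trans (inv n).2.2)
  refine ⟨m, ?_, ?_⟩
  · rintro t (rfl | rfl)
    · exact hmx
    · exact hmw
  · intro z hz
    have hzx : z ≤ x := hz (Set.mem_insert _ _)
    have hzw : z ≤ w := hz (Set.mem_insert_of_mem _ rfl)
    obtain ⟨f, hfB, hfmono, hfwb, hflub⟩ := hB z
    refine hflub.2 ?_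
    rintro t ⟨n, rfl⟩
    have hfC : f n ∈ C := ⟨hfB n, f (n + 1), hfwb n,
      (hflub.1 (Set.mem_range_self (n + 1))).trans hzx,
      (hflub.1 (Set.mem_range_self (n + 1))).trans hzw⟩
    rw [hc] at hfC
    obtain ⟨k, hk⟩ := hfC
    exact hk ▸ hcle k

end CuFormal
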